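/- The series ∑_{n=0}^∞ ((1/2)_n)^3/((1)_n^3) · (-1)^n equals (2+√2)/4 · Γ(3/4)² / Γ(7/8)^4. -/

import Mathlib

open Real Finset MeasureTheory

noncomputable def poch (a : ℝ) (n : ℕ) : ℝ := (ascPochhammer ℝ n).eval a

noncomputable def aa (n : ℕ) : ℝ := poch (1/4) n / n.factorial
noncomputable def bb (n : ℕ) : ℝ := poch (1/2) n / n.factorial





lemma poch_zero (x : ℝ) : poch x 0 = 1 := by simp [poch]

lemma poch_succ (x : ℝ) (n : ℕ) : poch x (n+1) = poch x n * (x + n) := by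
  simp [poch, ascPochhammer_succ_right]

lemma poch_pos {x : ℝ} (hx : 0 < x) (n : ℕ) : 0 < poch x n := by
  induction n with
  | zero => simp [poch_zero]
  | succ n ih => rw [poch_succ]; positivity

lemma aa_zero : aa 0 = 1 := by simp [aa, poch_zero]
lemma bb_zero : bb 0 = 1 := by simp [bb, poch_zero]

lemma aa_pos (n : ℕ) : 0 < aa n := by
  have := poch_pos (by norm_num : (0:ℝ) < 1/4) n
  have : (0:ℝ) < n.factorial := by positivity
  unfold aa
  positivity

lemma bb_pos (n : ℕ) : 0 < bb n := by
  have := poch_pos (by norm_num : (0:ℝ) < 1/2) n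
  have : (0:ℝ) < n.factorial := by positivity
  unfold bb
  positivity

lemma aa_succ (n : ℕ) : aa (n+1) * (4 * n + 4) = aa n * (4 * n + 1) := by
  unfold aa
  rw [poch_succ, Nat.factorial_succ]
  have h1 : ((n+1).factorial : ℝ) ≠ 0 := by positivity
  have h2 : ((n:ℝ) + 1) ≠ 0 := by positivity
  push_cast [Nat.factorial_succ]
  field_simp
  ring

lemma bb_succ (n : ℕ) : bb (n+1) * (2 * n + 2) = bb n * (2 * n + 1) := by
  unfold bb
  rw [poch_succ, Nat.factorial_succ]
  push_cast [Nat.factorial_succ]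
  field_simp
  ring




lemma aa_succ' (n : ℕ) : aa (n+1) = aa n * (4 * n + 1) / (4 * n + 4) := by
  have h := aa_succ n
  field_simp
  linarith [h]

lemma clausen (n : ℕ) :
    ∑ k ∈ range (n+1), (aa k)^2 * (aa (n-k))^2 = (bb n)^3 := by
  induction n with
  | zero => simp [aa_zero, bb_zero]
  | succ n ih =>
    set g : ℕ → ℝ := fun k => -8 * k^2 * (3*(n:ℝ) - 2*k + 3) * (aa k)^2 * (aa (n+1-k))^2 with hg
    have key : ∀ k ≤ n,
        (2*(n:ℝ)+2)^3 * ((aa k)^2 * (aa (n+1-k))^2)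
          - (2*(n:ℝ)+1)^3 * ((aa k)^2 * (aa (n-k))^2) = g (k+1) - g k := by
      intro k hk
      obtain ⟨j, hj⟩ : ∃ j, n = k + j := ⟨n - k, by omega⟩
      subst hj
      have e1 : k + j + 1 - k = j + 1 := by omega
      have e2 : k + j - k = j := by omega
      have e3 : k + j + 1 - (k + 1) = j := by omega
      rw [hg]
      simp only [e1, e2, e3]
      rw [aa_succ' j, aa_succ' k]
      have hA := (aa_pos k).ne'
      have hB := (aa_pos j).ne'
      have h4k : ((4:ℝ) * k + 4) ≠ 0 := by positivity
      have h4j : ((4:ℝ) * j + 4) ≠ 0 := by positivity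
      push_cast
      field_simp
      ring
    have tele : ∑ k ∈ range (n+1), (g (k+1) - g k) = g (n+1) - g 0 :=
      Finset.sum_range_sub g (n+1)
    have hsum : (2*(n:ℝ)+2)^3 * ∑ k ∈ range (n+1), (aa k)^2 * (aa (n+1-k))^2
        - (2*(n:ℝ)+1)^3 * ∑ k ∈ range (n+1), (aa k)^2 * (aa (n-k))^2
        = g (n+1) - g 0 := by
      rw [← tele, Finset.mul_sum, Finset.mul_sum, ← Finset.sum_sub_distrib]
      exact Finset.sum_congr rfl fun k hk => key k (by simpa using Nat.lt_succ_iff.mp (mem_range.mp hk))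
    have hg0 : g 0 = 0 := by simp [hg]
    have hgn1 : g (n+1) = -8 * ((n:ℝ)+1)^3 * (aa (n+1))^2 := by
      rw [hg]
      simp only [Nat.add_sub_cancel, Nat.sub_self, aa_zero]
      push_cast
      ring
    -- S(n+1) = sum over range(n+2)
    have hsplit : ∑ k ∈ range (n+2), (aa k)^2 * (aa (n+1-k))^2
        = (∑ k ∈ range (n+1), (aa k)^2 * (aa (n+1-k))^2) + (aa (n+1))^2 := by
      rw [Finset.sum_range_succ]
      simp [aa_zero]
    have hrec : (2*(n:ℝ)+2)^3 * ∑ k ∈ range (n+2), (aa k)^2 * (aa (n+1-k))^2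
        = (2*(n:ℝ)+1)^3 * (bb n)^3 := by
      rw [hsplit, mul_add]
      have hz : (2*(n:ℝ)+2)^3 * (aa (n+1))^2 + (g (n+1) - g 0) = 0 := by
        rw [hg0, hgn1]; ring
      have h2 := hsum
      rw [ih] at h2
      linarith [h2, hz]
    have hb : (2*(n:ℝ)+2)^3 * (bb (n+1))^3 = (2*(n:ℝ)+1)^3 * (bb n)^3 := by
      have h := bb_succ n
      have : (bb (n+1) * (2*(n:ℝ)+2))^3 = (bb n * (2*(n:ℝ)+1))^3 := by rw [h]
      nlinarith [this]
    have h2pos : (0:ℝ) < (2*(n:ℝ)+2)^3 := by positivity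
    have := hrec.trans hb.symm
    exact mul_left_cancel₀ h2pos.ne' this



lemma bb_sq_le (n : ℕ) : (bb n)^2 * (2*n+1) ≤ 1 := by
  induction n with
  | zero => simp [bb_zero]
  | succ n ih =>
    have h := bb_succ n
    have h2 : ((2:ℝ)*n+2) ≠ 0 := by positivity
    have hb : bb (n+1) = bb n * (2*n+1) / (2*n+2) := by
      field_simp; linarith [h]
    rw [hb]
    have hbn := bb_pos n
    have key : (bb n * (2*↑n+1) / (2*↑n+2))^2 * (2*↑(n+1)+1)
        = (bb n ^2 * (2*↑n+1)) * ((2*↑n+1)*(2*↑n+3)/(2*↑n+2)^2) := by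
      push_cast; field_simp; ring
    rw [key]
    have hfrac : ((2*(n:ℝ)+1)*(2*↑n+3)/(2*↑n+2)^2) ≤ 1 := by
      rw [div_le_one (by positivity)]; nlinarith
    have h1 : (0:ℝ) ≤ bb n ^2 * (2*↑n+1) := by positivity
    calc (bb n ^2 * (2*↑n+1)) * ((2*↑n+1)*(2*↑n+3)/(2*↑n+2)^2)
        ≤ (bb n ^2 * (2*↑n+1)) * 1 := by
          exact mul_le_mul_of_nonneg_left hfrac h1
      _ ≤ 1 := by rw [mul_one]; exact ih

lemma ratio_le (n : ℕ) : (aa n)^4 * (4*n+1) ≤ (bb n)^4 := by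
  induction n with
  | zero => simp [aa_zero, bb_zero]
  | succ n ih =>
    have ha := aa_succ n
    have hb := bb_succ n
    have h4 : ((4:ℝ)*n+4) ≠ 0 := by positivity
    have h2 : ((2:ℝ)*n+2) ≠ 0 := by positivity
    have haa : aa (n+1) = aa n * (4*n+1) / (4*n+4) := by field_simp; linarith [ha]
    have hbb : bb (n+1) = bb n * (2*n+1) / (2*n+2) := by field_simp; linarith [hb]
    rw [haa, hbb]
    have han := aa_pos n
    have hbn := bb_pos n
    push_cast
    rw [div_pow, div_pow, div_mul_eq_mul_div, div_le_div_iff₀ (by positivity) (by positivity)]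
    have expand : aa n ^4 * ((4*(n:ℝ)+1)^4) * (4*↑n+5) * (2*↑n+2)^4
        = (aa n ^4 * (4*↑n+1)) * ((4*↑n+1)^3 * (4*↑n+5) * (2*↑n+2)^4) := by ring
    have expand2 : bb n ^4 * (2*(n:ℝ)+1)^4 * (4*↑n+4)^4
        = (bb n)^4 * ((2*↑n+1)^4 * (4*↑n+4)^4) := by ring
    calc (aa n * (4*(n:ℝ)+1))^4 * (4*(↑n+1)+1) * (2*↑n+2)^4
        = (aa n ^4 * (4*↑n+1)) * ((4*↑n+1)^3 * (4*↑n+5) * (2*↑n+2)^4) := by push_cast; ring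
      _ ≤ (bb n)^4 * ((4*↑n+1)^3 * (4*↑n+5) * (2*↑n+2)^4) := by
          apply mul_le_mul_of_nonneg_right ih (by positivity)
      _ ≤ (bb n)^4 * ((2*↑n+1)^4 * (4*↑n+4)^4) := by
          apply mul_le_mul_of_nonneg_left _ (by positivity)
          have hn : (0:ℝ) ≤ (n:ℝ) := Nat.cast_nonneg n
          have hred : (4*(n:ℝ)+1)^3*(4*↑n+5) ≤ 16*(2*↑n+1)^4 := by nlinarith [sq_nonneg ((n:ℝ))]
          calc (4*(n:ℝ)+1)^3 * (4*↑n+5) * (2*↑n+2)^4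
              ≤ 16*(2*↑n+1)^4 * (2*↑n+2)^4 :=
            mul_le_mul_of_nonneg_right hred (by positivity)
            _ = (2*↑n+1)^4 * (4*↑n+4)^4 := by ring
      _ = (bb n * (2*(n:ℝ)+1))^4 * (4*↑n+4)^4 := by ring

lemma aa_sq_le (n : ℕ) : (aa n)^2 ≤ (((n:ℝ)+1) ^ ((3:ℝ)/2))⁻¹ := by
  have h1 := bb_sq_le n
  have h2 := ratio_le n
  have han := aa_pos n
  have hbn := bb_pos n
  -- aa n ^2 ≤ bb n^2 / sqrt(4n+1)
  have hs : (aa n)^2 * Real.sqrt (4*(n:ℝ)+1) ≤ (bb n)^2 := by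
    have h41 : (0:ℝ) ≤ 4*(n:ℝ)+1 := by positivity
    have hx2 : ((aa n)^2 * Real.sqrt (4*(n:ℝ)+1))^2 ≤ ((bb n)^2)^2 := by
      rw [mul_pow, Real.sq_sqrt h41]
      calc (aa n^2)^2 * (4*(n:ℝ)+1) = aa n^4 * (4*↑n+1) := by ring
        _ ≤ bb n^4 := h2
        _ = (bb n^2)^2 := by ring
    have := Real.sqrt_le_sqrt hx2
    rwa [Real.sqrt_sq (by positivity), Real.sqrt_sq (by positivity)] at this
  have hsqrt : Real.sqrt ((n:ℝ)+1) ≤ Real.sqrt (4*(n:ℝ)+1) := by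
    apply Real.sqrt_le_sqrt; linarith
  have hfin : (aa n)^2 * (((n:ℝ)+1) * Real.sqrt ((n:ℝ)+1)) ≤ 1 := by
    have e1 : (aa n)^2 * (((n:ℝ)+1) * Real.sqrt ((n:ℝ)+1))
        ≤ (aa n)^2 * Real.sqrt (4*(n:ℝ)+1) * ((n:ℝ)+1) := by
      have := mul_le_mul_of_nonneg_left hsqrt (by positivity : (0:ℝ) ≤ (aa n)^2 * ((n:ℝ)+1))
      nlinarith [this]
    have e2 : (aa n)^2 * Real.sqrt (4*(n:ℝ)+1) * ((n:ℝ)+1) ≤ (bb n)^2 * ((n:ℝ)+1) := by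
      exact mul_le_mul_of_nonneg_right hs (by positivity)
    have e3 : (bb n)^2 * ((n:ℝ)+1) ≤ (bb n)^2 * (2*(n:ℝ)+1) := by
      apply mul_le_mul_of_nonneg_left _ (by positivity); linarith
    calc (aa n)^2 * (((n:ℝ)+1) * Real.sqrt ((n:ℝ)+1)) ≤ _ := e1
      _ ≤ _ := e2
      _ ≤ (bb n)^2 * (2*(n:ℝ)+1) := e3
      _ ≤ 1 := by push_cast at h1 ⊢; linarith [h1]
  have hx : (0:ℝ) < (n:ℝ)+1 := by positivity
  have hrw : ((n:ℝ)+1) ^ ((3:ℝ)/2) = ((n:ℝ)+1) * Real.sqrt ((n:ℝ)+1) := by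
    rw [show ((3:ℝ)/2) = 1 + 1/2 by norm_num, Real.rpow_add hx, Real.rpow_one,
      ← Real.sqrt_eq_rpow]
  rw [hrw]
  have hpos : (0:ℝ) < ((n:ℝ)+1) * Real.sqrt ((n:ℝ)+1) := by positivity
  rw [inv_eq_one_div, le_div_iff₀ hpos]
  exact hfin

lemma summable_aa_sq : Summable (fun n => (aa n)^2) := by
  have h : Summable (fun n : ℕ => (((n:ℝ)+1) ^ ((3:ℝ)/2))⁻¹) := by
    have := (Real.summable_nat_rpow_inv (p := (3:ℝ)/2)).mpr (by norm_num)
    have h2 := (summable_nat_add_iff 1).mpr this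
    simpa [add_comm] using h2
  exact Summable.of_nonneg_of_le (fun n => by positivity) (fun n => aa_sq_le n) h



lemma aa_le_one (n : ℕ) : aa n ≤ 1 := by
  induction n with
  | zero => simp [aa_zero]
  | succ n ih =>
    have h := aa_succ n
    have h4 : (0:ℝ) < 4*n+4 := by positivity
    have : aa (n+1) * (4*n+4) ≤ 1 * (4*n+4) := by
      rw [h]
      have := (aa_pos n)
      nlinarith
    exact le_of_mul_le_mul_right (by linarith) h4

lemma binom_hasSum {t : ℝ} (ht0 : 0 < t) (ht1 : t < 1) :
    HasSum (fun n => aa n * (-1)^n * t^n) ((1+t) ^ (-(1/4) : ℝ)) := by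
  set b := (1+t)/2 with hb
  have hb0 : 0 < b := by rw [hb]; linarith
  have htb : t < b := by rw [hb]; linarith
  have hb1 : b < 1 := by rw [hb]; linarith
  set s : Set ℝ := Set.Ioo (-b) b with hs
  have hsopen : IsOpen s := isOpen_Ioo
  have hsconn : IsPreconnected s := (convex_Ioo _ _).isPreconnected
  set g : ℕ → ℝ → ℝ := fun n y => aa n * (-1)^n * y^n with hgdef
  set g' : ℕ → ℝ → ℝ := fun n y => aa n * (-1)^n * (n * y^(n-1)) with hg'def
  set u : ℕ → ℝ := fun n => n * b^n / b with hu
  have husum : Summable u := by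
    have h1 : Summable (fun n : ℕ => (n:ℝ)^1 * b^n) := by
      apply summable_pow_mul_geometric_of_norm_lt_one
      rw [Real.norm_eq_abs, abs_of_pos hb0]; exact hb1
    have := h1.div_const b
    apply this.congr
    intro n; simp [hu]
  have hderiv : ∀ n y, y ∈ s → HasDerivAt (g n) (g' n y) y := by
    intro n y _
    simpa [hgdef, hg'def, mul_assoc] using (hasDerivAt_pow n y).const_mul (aa n * (-1)^n)
  have hbound : ∀ n y, y ∈ s → ‖g' n y‖ ≤ u n := by
    intro n y hy
    rcases n with _ | m
    · simp [hg'def, hu]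
    · have hyb : |y| ≤ b := by
        rcases hy with ⟨h1, h2⟩
        rw [abs_le]; constructor <;> linarith
      have : ‖g' (m+1) y‖ = aa (m+1) * ((m:ℝ)+1) * |y|^m := by
        simp only [hg'def, Nat.add_sub_cancel, Real.norm_eq_abs, abs_mul, abs_pow, abs_neg,
          abs_one, one_pow, mul_one, abs_of_pos (aa_pos (m+1))]
        rw [Nat.cast_add, Nat.cast_one, abs_of_nonneg (by positivity : (0:ℝ) ≤ (m:ℝ)+1)]
        ring
      rw [this, hu]
      have h1 : aa (m+1) * ((m:ℝ)+1) * |y|^m ≤ 1 * ((m:ℝ)+1) * b^m := by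
        apply mul_le_mul
        · apply mul_le_mul (aa_le_one _) le_rfl (by positivity) zero_le_one
        · exact pow_le_pow_left₀ (abs_nonneg _) hyb m
        · positivity
        · positivity
      have h2 : 1 * ((m:ℝ)+1) * b^m = ((m+1:ℕ):ℝ) * b^(m+1) / b := by
        push_cast
        field_simp
        ring
      calc aa (m+1) * ((m:ℝ)+1) * |y|^m ≤ 1 * ((m:ℝ)+1) * b^m := h1
        _ = _ := by rw [h2]
  have h0s : (0:ℝ) ∈ s := ⟨by linarith, hb0⟩
  have hg0 : Summable (fun n => g n 0) := by
    apply summable_of_ne_finset_zero (s := {0})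
    intro n hn
    simp only [Finset.mem_singleton] at hn
    simp [hgdef, zero_pow hn]
  -- the sum function
  set F : ℝ → ℝ := fun y => ∑' n, g n y with hF
  have hFderiv : ∀ y ∈ s, HasDerivAt F (∑' n, g' n y) y := fun y hy =>
    hasDerivAt_tsum_of_isPreconnected husum hsopen hsconn hderiv hbound h0s hg0 hy
  have hgsummable : ∀ y ∈ s, Summable (fun n => g n y) := by
    intro y hy
    apply Summable.of_norm_bounded (g := fun n => b^n)
    · exact summable_geometric_of_lt_one hb0.le hb1
    · intro n
      have hyb : |y| ≤ b := by
        rcases hy with ⟨h1, h2⟩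
        rw [abs_le]; constructor <;> linarith
      have : ‖g n y‖ = aa n * |y|^n := by
        simp [hgdef, abs_mul, abs_pow, abs_of_pos (aa_pos n)]
      rw [this]
      calc aa n * |y|^n ≤ 1 * b^n := by
            apply mul_le_mul (aa_le_one n) (pow_le_pow_left₀ (abs_nonneg _) hyb n) (by positivity) zero_le_one
        _ = b^n := one_mul _
  have hg'summable : ∀ y ∈ s, Summable (fun n => g' n y) := by
    intro y hy
    exact Summable.of_norm_bounded husum (fun n => hbound n y hy)
  -- ODE : (1+y) * D = -(1/4) * F y
  have hODE : ∀ y ∈ s, (1+y) * (∑' n, g' n y) = -(1/4) * F y := by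
    intro y hy
    have hsum' := hg'summable y hy
    have hsumg := hgsummable y hy
    -- y * D
    have hyD : y * (∑' n, g' n y) = ∑' n, aa n * (-1)^n * (n * y^n) := by
      rw [← tsum_mul_left]
      apply tsum_congr
      intro n
      rcases n with _ | m
      · simp [hg'def]
      · simp only [hg'def, Nat.add_sub_cancel]
        rw [pow_succ]
        ring
    -- D itself via shift
    have hD : (∑' n, g' n y) = ∑' n, aa (n+1) * (-1)^(n+1) * (((n:ℝ)+1) * y^n) := by
      rw [Summable.tsum_eq_zero_add hsum']
      simp only [hg'def]
      rw [show aa 0 * (-1)^0 * ((0:ℕ) * y^(0-1)) = 0 by simp]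
      rw [zero_add]
      apply tsum_congr
      intro n
      simp [Nat.add_sub_cancel]
    -- summables for combination
    have s1 : Summable (fun n => aa (n+1) * (-1)^(n+1) * (((n:ℝ)+1) * y^n)) := by
      rw [← summable_nat_add_iff 1] at hsum'
      apply hsum'.congr
      intro n
      simp [hg'def, Nat.add_sub_cancel]
    have s2 : Summable (fun n => aa n * (-1)^n * ((n:ℝ) * y^n)) := by
      apply (hsum'.mul_left y).congr
      intro n
      rcases n with _ | m
      · simp [hg'def]
      · simp only [hg'def, Nat.add_sub_cancel]
        rw [pow_succ]
        push_cast
        ring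
    have s3 : Summable (fun n => aa n * (-1)^n * ((1:ℝ)/4 * y^n)) := by
      apply (hsumg.mul_left (1/4)).congr
      intro n
      simp only [hgdef]
      ring
    -- termwise zero
    have hterm : ∀ n : ℕ, aa (n+1) * (-1)^(n+1) * (((n:ℝ)+1) * y^n)
        + aa n * (-1)^n * ((n:ℝ) * y^n) + aa n * (-1)^n * ((1:ℝ)/4 * y^n) = 0 := by
      intro n
      have h := aa_succ n
      have key : aa (n+1) * ((n:ℝ)+1) = aa n * ((n:ℝ) + 1/4) := by
        nlinarith [h]
      linear_combination (-(-1:ℝ)^n * y^n) * key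
    have hcomb : (∑' n, g' n y) + y * (∑' n, g' n y) + (1/4) * F y = 0 := by
      rw [hyD, hD]
      have hFy : (1/4) * F y = ∑' n, aa n * (-1)^n * ((1:ℝ)/4 * y^n) := by
        rw [hF, ← tsum_mul_left]
        apply tsum_congr; intro n; simp only [hgdef]; ring
      rw [hFy, ← Summable.tsum_add s1 s2, ← Summable.tsum_add (s1.add s2) s3]
      rw [show (0:ℝ) = ∑' (_ : ℕ), (0:ℝ) by simp]
      apply tsum_congr
      intro n
      exact hterm n
    linarith [hcomb]
  -- Φ := (1+y)^(1/4) * F y has zero derivative on s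
  set Φ : ℝ → ℝ := fun z => (1+z) ^ ((1/4):ℝ) * F z with hΦ
  have hΦderiv : ∀ y ∈ s, HasDerivAt Φ 0 y := by
    intro y hy
    have hby : -b > -1 := by linarith
    have hy1 : 0 < 1 + y := by
      rcases hy with ⟨h1, h2⟩
      linarith
    have h1 : HasDerivAt (fun z : ℝ => 1 + z) 1 y := (hasDerivAt_id y).const_add 1
    have h2 : HasDerivAt (fun z : ℝ => (1+z) ^ ((1/4):ℝ))
        (1 * (1/4:ℝ) * (1+y)^((1/4:ℝ)-1)) y := h1.rpow_const (Or.inl hy1.ne')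
    have h3 := h2.mul (hFderiv y hy)
    have hzero : 1 * (1/4:ℝ) * (1+y)^((1/4:ℝ)-1) * F y
        + (1+y) ^ ((1/4):ℝ) * (∑' n, g' n y) = 0 := by
      have e : (1+y) ^ ((1/4):ℝ) * (∑' n, g' n y)
          = (1+y)^((1/4:ℝ)-1) * ((1+y) * (∑' n, g' n y)) := by
        rw [Real.rpow_sub hy1, Real.rpow_one]
        field_simp
      rw [e, hODE y hy]
      ring
    rw [hzero] at h3
    exact h3
  have hsub : Set.Icc (0:ℝ) t ⊆ s := by
    intro y hy
    rcases hy with ⟨h1, h2⟩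
    exact ⟨by linarith, by linarith⟩
  have hcont : ContinuousOn Φ (Set.Icc 0 t) := fun y hy =>
    ((hΦderiv y (hsub hy)).continuousAt).continuousWithinAt
  obtain ⟨c, hc, hcs⟩ := exists_hasDerivAt_eq_slope Φ (fun _ => 0) ht0 hcont
    (fun y hy => hΦderiv y (hsub ⟨hy.1.le, hy.2.le⟩))
  have hΦt : Φ t = Φ 0 := by
    have : (Φ t - Φ 0) / (t - 0) = 0 := hcs.symm
    have ht' : t - 0 ≠ 0 := by linarith
    field_simp at this
    linarith [this]
  have hF0 : F 0 = 1 := by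
    have h : F 0 = ∑' n, g n 0 := rfl
    rw [h, tsum_eq_single 0 (fun n hn => by simp [hgdef, zero_pow hn])]
    simp [hgdef, aa_zero]
  have hΦ0 : Φ 0 = 1 := by
    rw [hΦ]
    simp [hF0]
  have hts : t ∈ s := ⟨by linarith, htb⟩
  have hAne : ((1+t) ^ ((1/4):ℝ)) ≠ 0 := by
    have : (0:ℝ) < (1+t) ^ ((1/4):ℝ) := Real.rpow_pos_of_pos (by linarith) _
    exact this.ne'
  have hprod : (1+t) ^ ((1/4):ℝ) * F t = 1 := by
    have := hΦt.trans hΦ0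
    rw [hΦ] at this
    exact this
  have hFt : F t = (1+t) ^ (-(1/4) : ℝ) := by
    rw [Real.rpow_neg (by linarith : (0:ℝ) ≤ 1+t), inv_eq_one_div, eq_div_iff hAne]
    linear_combination hprod
  have := (hgsummable t hts).hasSum
  rw [show (∑' n, g n t) = F t from rfl, hFt] at this
  exact this


lemma realBeta {a b : ℝ} (ha : 0 < a) (hb : 0 < b) :
    ∫ x in (0:ℝ)..1, x^(a-1) * (1-x)^(b-1)
      = Real.Gamma a * Real.Gamma b / Real.Gamma (a+b) := by
  have h := Complex.Gamma_mul_Gamma_eq_betaIntegral (s := (a:ℂ)) (t := (b:ℂ))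
    (by simpa using ha) (by simpa using hb)
  have hbeta : Complex.betaIntegral a b
      = ((∫ x in (0:ℝ)..1, x^(a-1) * (1-x)^(b-1) : ℝ) : ℂ) := by
    rw [Complex.betaIntegral, ← intervalIntegral.integral_ofReal]
    apply intervalIntegral.integral_congr
    intro x hx
    rw [Set.uIcc_of_le (by norm_num : (0:ℝ) ≤ 1)] at hx
    rcases hx with ⟨h0, h1⟩
    have e1 : ((x:ℝ) : ℂ) ^ ((a:ℂ) - 1) = ((x ^ (a-1) : ℝ) : ℂ) := by
      rw [Complex.ofReal_cpow h0]
      push_cast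
      ring_nf
    have e2 : (1 - ((x:ℝ) : ℂ)) ^ ((b:ℂ) - 1) = (((1-x) ^ (b-1) : ℝ) : ℂ) := by
      rw [show (1 - ((x:ℝ):ℂ)) = (((1-x : ℝ)):ℂ) by push_cast; ring]
      rw [Complex.ofReal_cpow (by linarith)]
      push_cast
      ring_nf
    simp only [e1, e2]
    push_cast
    ring
  rw [hbeta, ← Complex.ofReal_add, Complex.Gamma_ofReal, Complex.Gamma_ofReal,
    Complex.Gamma_ofReal] at h
  have h2 : Real.Gamma a * Real.Gamma b = Real.Gamma (a+b) * ∫ x in (0:ℝ)..1, x^(a-1) * (1-x)^(b-1) := by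
    exact_mod_cast h
  have h3 : Real.Gamma (a+b) ≠ 0 := (Real.Gamma_pos_of_pos (by linarith)).ne'
  field_simp
  linarith [h2]



lemma Gamma_poch {x : ℝ} (hx : 0 < x) (n : ℕ) :
    Real.Gamma (x + n) = poch x n * Real.Gamma x := by
  induction n with
  | zero => simp [poch_zero]
  | succ n ih =>
    have hxn : x + (n:ℝ) ≠ 0 := by positivity
    have : Real.Gamma (x + (n+1:ℕ)) = (x + n) * Real.Gamma (x + n) := by
      rw [show (x + ((n+1:ℕ):ℝ)) = (x + n) + 1 by push_cast; ring]
      exact Real.Gamma_add_one hxn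
    rw [this, ih, poch_succ]
    ring

lemma betaIntegrable {a b : ℝ} (ha : 0 < a) (hb : 0 < b) :
    IntegrableOn (fun x => x^(a-1) * (1-x)^(b-1)) (Set.Ioo (0:ℝ) 1) := by
  have hconv := Complex.betaIntegral_convergent (u := (a:ℂ)) (v := (b:ℂ))
    (by simpa using ha) (by simpa using hb)
  have h1 : IntegrableOn (fun x : ℝ => ((x:ℂ)) ^ ((a:ℂ)-1) * (1 - (x:ℂ)) ^ ((b:ℂ)-1))
      (Set.Ioo (0:ℝ) 1) := by
    have := hconv.1
    rw [intervalIntegrable_iff_integrableOn_Ioo_of_le (by norm_num)] at hconv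
    exact hconv
  have h2 : IntegrableOn (fun x : ℝ => (((x:ℂ)) ^ ((a:ℂ)-1) * (1 - (x:ℂ)) ^ ((b:ℂ)-1)).re)
      (Set.Ioo (0:ℝ) 1) := h1.re
  apply h2.congr_fun _ measurableSet_Ioo
  intro x hx
  rcases hx with ⟨h0, h1'⟩
  have e1 : ((x:ℝ) : ℂ) ^ ((a:ℂ) - 1) = ((x ^ (a-1) : ℝ) : ℂ) := by
    rw [Complex.ofReal_cpow h0.le]; push_cast; ring_nf
  have e2 : (1 - ((x:ℝ) : ℂ)) ^ ((b:ℂ) - 1) = (((1-x) ^ (b-1) : ℝ) : ℂ) := by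
    rw [show (1 - ((x:ℝ):ℂ)) = (((1-x : ℝ)):ℂ) by push_cast; ring]
    rw [Complex.ofReal_cpow (by linarith)]; push_cast; ring_nf
  simp only [e1, e2, ← Complex.ofReal_mul, Complex.ofReal_re]


lemma betaIoo {a b : ℝ} (ha : 0 < a) (hb : 0 < b) :
    ∫ x in Set.Ioo (0:ℝ) 1, x^(a-1) * (1-x)^(b-1)
      = Real.Gamma a * Real.Gamma b / Real.Gamma (a+b) := by
  rw [← realBeta ha hb, intervalIntegral.integral_of_le (by norm_num : (0:ℝ) ≤ 1),
    MeasureTheory.integral_Ioc_eq_integral_Ioo]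

lemma beta_aa (n : ℕ) :
    ∫ x in Set.Ioo (0:ℝ) 1, x^((n:ℝ)-3/4) * (1-x)^(-(1/4):ℝ)
      = aa n * (Real.Gamma (1/4) * Real.Gamma (3/4)) := by
  have h := betaIoo (a := (n:ℝ)+1/4) (b := (3/4:ℝ)) (by positivity) (by norm_num)
  rw [show ((n:ℝ)+1/4-1) = (n:ℝ)-3/4 by ring, show ((3/4:ℝ)-1) = -(1/4:ℝ) by norm_num] at h
  rw [h]
  rw [show ((n:ℝ)+1/4) = 1/4 + (n:ℝ) by ring, Gamma_poch (by norm_num : (0:ℝ) < 1/4) n]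
  rw [show (1/4 + (n:ℝ) + 3/4) = (n:ℝ) + 1 by ring]
  rw [show ((n:ℝ) + 1) = ((n:ℕ):ℝ) + 1 by norm_num, Real.Gamma_nat_eq_factorial]
  have hfac : (0:ℝ) < n.factorial := by positivity
  rw [aa]
  field_simp

lemma kummer : ∑' n : ℕ, (aa n)^2 * (-1:ℝ)^n
    = Real.Gamma (1/8) / (2 * Real.Gamma (7/8) * Real.Gamma (1/4)) := by
  set C4 : ℝ := Real.Gamma (1/4) * Real.Gamma (3/4) with hC4
  have hC4pos : 0 < C4 := by
    exact mul_pos (Real.Gamma_pos_of_pos (by norm_num)) (Real.Gamma_pos_of_pos (by norm_num))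
  set f : ℕ → ℝ → ℝ := fun n x => ((-1:ℝ)^n * aa n) * (x^((n:ℝ)-3/4) * (1-x)^(-(1/4):ℝ))
    with hf
  have hInt : ∀ n, IntegrableOn (f n) (Set.Ioo (0:ℝ) 1) := by
    intro n
    have h := (betaIntegrable (a := (n:ℝ)+1/4) (b := (3/4:ℝ)) (by positivity) (by norm_num)).const_mul
      ((-1:ℝ)^n * aa n)
    rw [show ((n:ℝ)+1/4-1) = (n:ℝ)-3/4 by ring, show ((3/4:ℝ)-1) = -(1/4:ℝ) by norm_num] at h
    exact h
  have hNormVal : ∀ n, ∫ x in Set.Ioo (0:ℝ) 1, ‖f n x‖ = (aa n)^2 * C4 := by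
    intro n
    have hcong : ∫ x in Set.Ioo (0:ℝ) 1, ‖f n x‖
        = ∫ x in Set.Ioo (0:ℝ) 1, aa n * (x^((n:ℝ)-3/4) * (1-x)^(-(1/4):ℝ)) := by
      apply MeasureTheory.setIntegral_congr_fun measurableSet_Ioo
      intro x hx
      rcases hx with ⟨h0, h1⟩
      dsimp only
      have hx1 : (0:ℝ) < 1 - x := by linarith
      have p1 : (0:ℝ) < x^((n:ℝ)-3/4) := Real.rpow_pos_of_pos h0 _
      have p2 : (0:ℝ) < (1-x)^(-(1/4):ℝ) := Real.rpow_pos_of_pos hx1 _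
      have pa := aa_pos n
      rw [hf]
      simp only [Real.norm_eq_abs, abs_mul, abs_pow, abs_neg, abs_one, one_pow, one_mul,
        abs_of_pos pa, abs_of_pos p1, abs_of_pos p2]
    rw [hcong, MeasureTheory.integral_const_mul, beta_aa n]
    ring
  have hNormSum : Summable (fun n => ∫ x in Set.Ioo (0:ℝ) 1, ‖f n x‖) := by
    apply Summable.congr (summable_aa_sq.mul_right C4)
    intro n
    rw [hNormVal n]
  have key := MeasureTheory.integral_tsum_of_summable_integral_norm hInt hNormSum
  -- LHS of key
  have hL : ∑' n, ∫ x in Set.Ioo (0:ℝ) 1, f n x = (∑' n, (aa n)^2 * (-1:ℝ)^n) * C4 := by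
    rw [← tsum_mul_right]
    apply tsum_congr
    intro n
    rw [hf]
    simp only []
    rw [MeasureTheory.integral_const_mul, beta_aa n]
    ring
  -- RHS of key: pointwise sum
  have hR : ∫ x in Set.Ioo (0:ℝ) 1, (∑' n, f n x)
      = ∫ x in Set.Ioo (0:ℝ) 1, x^(-(3/4):ℝ) * ((1-x)^(-(1/4):ℝ) * (1+x)^(-(1/4):ℝ)) := by
    apply MeasureTheory.setIntegral_congr_fun measurableSet_Ioo
    intro x hx
    rcases hx with ⟨h0, h1⟩
    dsimp only
    have hbs := (binom_hasSum h0 h1).mul_right (x^(-(3/4):ℝ) * (1-x)^(-(1/4):ℝ))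
    have heq : ∀ n : ℕ, aa n * (-1)^n * x^n * (x^(-(3/4):ℝ) * (1-x)^(-(1/4):ℝ)) = f n x := by
      intro n
      rw [hf]
      simp only []
      rw [show ((n:ℝ)-3/4) = (n:ℝ) + (-(3/4):ℝ) by ring, Real.rpow_add h0,
        Real.rpow_natCast]
      ring
    rw [show (∑' n, f n x) = ∑' n, aa n * (-1)^n * x^n * (x^(-(3/4):ℝ) * (1-x)^(-(1/4):ℝ))
      from (tsum_congr fun n => (heq n).symm)]
    rw [hbs.tsum_eq]
    ring
  -- substitution x ↦ x^2
  have himg : (fun x : ℝ => x^2) '' Set.Ioo 0 1 = Set.Ioo (0:ℝ) 1 := by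
    ext y
    constructor
    · rintro ⟨x, ⟨hx0, hx1⟩, rfl⟩
      dsimp only
      exact ⟨by positivity, by nlinarith⟩
    · rintro ⟨hy0, hy1⟩
      refine ⟨Real.sqrt y, ⟨Real.sqrt_pos.mpr hy0, ?_⟩, ?_⟩
      · have := Real.sqrt_lt_sqrt hy0.le hy1
        simpa using this
      · dsimp only
        exact Real.sq_sqrt hy0.le
  have hsub := MeasureTheory.integral_image_eq_integral_abs_deriv_smul measurableSet_Ioo
    (f := fun x : ℝ => x^2) (f' := fun x : ℝ => 2*x) (s := Set.Ioo 0 1)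
    (fun x _ => (by simpa using (hasDerivAt_pow 2 x).hasDerivWithinAt : HasDerivWithinAt (fun x : ℝ => x^2) (2*x) (Set.Ioo 0 1) x))
    (fun x hx y hy h => by
      rcases hx with ⟨hx0, _⟩
      rcases hy with ⟨hy0, _⟩
      dsimp only at h
      nlinarith)
    (fun u => u^(-(7/8):ℝ) * (1-u)^(-(1/4):ℝ))
  rw [himg] at hsub
  have hsubR : ∫ x in Set.Ioo (0:ℝ) 1, |2*x| • ((x^2:ℝ)^(-(7/8):ℝ) * (1-x^2)^(-(1/4):ℝ))
      = ∫ x in Set.Ioo (0:ℝ) 1, 2 * (x^(-(3/4):ℝ) * ((1-x)^(-(1/4):ℝ) * (1+x)^(-(1/4):ℝ))) := by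
    apply MeasureTheory.setIntegral_congr_fun measurableSet_Ioo
    intro x hx
    rcases hx with ⟨h0, h1⟩
    dsimp only
    have e1 : ((x:ℝ)^2)^(-(7/8):ℝ) = x^(-(7/4):ℝ) := by
      rw [← Real.rpow_natCast x 2, ← Real.rpow_mul h0.le]
      norm_num
    have e2 : (1 - x^2 : ℝ) = (1-x) * (1+x) := by ring
    have e3 : ((1-x) * (1+x) : ℝ)^(-(1/4):ℝ) = (1-x)^(-(1/4):ℝ) * (1+x)^(-(1/4):ℝ) :=
      Real.mul_rpow (by linarith) (by linarith)
    rw [e1, e2, e3, abs_of_pos (by linarith : (0:ℝ) < 2*x)]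
    have e4 : x * x^(-(7/4):ℝ) = x^(-(3/4):ℝ) := by
      nth_rewrite 1 [← Real.rpow_one x]
      rw [← Real.rpow_add h0]
      norm_num
    rw [smul_eq_mul]
    calc 2*x * (x^(-(7/4):ℝ) * ((1-x)^(-(1/4):ℝ) * (1+x)^(-(1/4):ℝ)))
        = 2 * ((x * x^(-(7/4):ℝ)) * ((1-x)^(-(1/4):ℝ) * (1+x)^(-(1/4):ℝ))) := by ring
      _ = _ := by rw [e4]
  have hbeta18 : ∫ u in Set.Ioo (0:ℝ) 1, u^(-(7/8):ℝ) * (1-u)^(-(1/4):ℝ)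
      = Real.Gamma (1/8) * Real.Gamma (3/4) / Real.Gamma (7/8) := by
    have h := betaIoo (a := (1/8:ℝ)) (b := (3/4:ℝ)) (by norm_num) (by norm_num)
    rw [show ((1/8:ℝ)-1) = -(7/8:ℝ) by norm_num, show ((3/4:ℝ)-1) = -(1/4:ℝ) by norm_num,
      show ((1/8:ℝ)+3/4) = 7/8 by norm_num] at h
    exact h
  -- combine
  have hJ : (∑' n, (aa n)^2 * (-1:ℝ)^n) * C4
      = Real.Gamma (1/8) * Real.Gamma (3/4) / (2 * Real.Gamma (7/8)) := by
    rw [← hL, key, hR]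
    have h2 : ∫ x in Set.Ioo (0:ℝ) 1, 2 * (x^(-(3/4):ℝ) * ((1-x)^(-(1/4):ℝ) * (1+x)^(-(1/4):ℝ)))
        = 2 * ∫ x in Set.Ioo (0:ℝ) 1, x^(-(3/4):ℝ) * ((1-x)^(-(1/4):ℝ) * (1+x)^(-(1/4):ℝ)) :=
      MeasureTheory.integral_const_mul 2 _
    have := hsub
    rw [hsubR, h2, hbeta18] at this
    have h78 : (0:ℝ) < Real.Gamma (7/8) := Real.Gamma_pos_of_pos (by norm_num)
    rw [eq_div_iff (by positivity : (2:ℝ) * Real.Gamma (7/8) ≠ 0)]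
    rw [div_eq_iff h78.ne'] at this
    linarith [this]
  have hG78 : (0:ℝ) < Real.Gamma (7/8) := Real.Gamma_pos_of_pos (by norm_num)
  have hG14 : (0:ℝ) < Real.Gamma (1/4) := Real.Gamma_pos_of_pos (by norm_num)
  have hG34 : (0:ℝ) < Real.Gamma (3/4) := Real.Gamma_pos_of_pos (by norm_num)
  rw [hC4] at hJ
  have h1 : (∑' n, (aa n)^2 * (-1:ℝ)^n) * (2 * Real.Gamma (7/8) * Real.Gamma (1/4)) * Real.Gamma (3/4)
      = Real.Gamma (1/8) * Real.Gamma (3/4) := by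
    field_simp at hJ
    linear_combination Real.Gamma (3/4) * hJ
  have h2 := mul_right_cancel₀ hG34.ne' h1
  rw [eq_div_iff (by positivity)]
  exact h2



lemma poch_one (n : ℕ) : poch 1 n = n.factorial := by
  induction n with
  | zero => simp [poch_zero]
  | succ n ih => rw [poch_succ, ih, Nat.factorial_succ]; push_cast; ring

lemma cauchy_sq : ∑' n : ℕ, (bb n)^3 * (-1:ℝ)^n
    = (∑' n : ℕ, (aa n)^2 * (-1:ℝ)^n)^2 := by
  set c : ℕ → ℝ := fun n => (aa n)^2 * (-1:ℝ)^n with hc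
  have hnorm : Summable (fun n => ‖c n‖) := by
    apply summable_aa_sq.congr
    intro n
    rw [hc]
    simp [abs_mul, abs_pow, sq_abs]
  have key := tsum_mul_tsum_eq_tsum_sum_range_of_summable_norm hnorm hnorm
  rw [sq, key]
  apply tsum_congr
  intro n
  rw [← clausen n, Finset.sum_mul]
  apply Finset.sum_congr rfl
  intro k hk
  have hk' : k ≤ n := Nat.lt_succ_iff.mp (Finset.mem_range.mp hk)
  rw [hc]
  dsimp only
  have hpow : ((-1:ℝ))^k * (-1)^(n-k) = (-1)^n := by
    rw [← pow_add, Nat.add_sub_cancel' hk']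
  rw [← hpow]
  ring

theorem final : (∑' n : ℕ, (bb n)^3 * (-1:ℝ)^n)
    = (2 + Real.sqrt 2)/4 * (Real.Gamma (3/4))^2 / (Real.Gamma (7/8))^4 := by
  rw [cauchy_sq, kummer]
  have hpi : (0:ℝ) < π := Real.pi_pos
  have hs8pos : (0:ℝ) < Real.sin (π/8) := by
    apply Real.sin_pos_of_pos_of_lt_pi <;> nlinarith
  have hsqrt2 : Real.sqrt 2 ^ 2 = 2 := Real.sq_sqrt (by norm_num)
  have hsqrt2' : (1:ℝ) < Real.sqrt 2 := by nlinarith [Real.sqrt_nonneg (2:ℝ)]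
  have hsqrt2'' : Real.sqrt 2 < 2 := by nlinarith [Real.sqrt_nonneg (2:ℝ)]
  have e1 : Real.Gamma (1/8) * Real.Gamma (7/8) = π / Real.sin (π/8) := by
    have := Real.Gamma_mul_Gamma_one_sub (1/8)
    rw [show (1 - (1/8:ℝ)) = 7/8 by norm_num] at this
    rw [this, show (π * (1/8:ℝ)) = π/8 by ring]
  have e2 : Real.Gamma (1/4) * Real.Gamma (3/4) = π * Real.sqrt 2 := by
    have := Real.Gamma_mul_Gamma_one_sub (1/4)
    rw [show (1 - (1/4:ℝ)) = 3/4 by norm_num] at this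
    rw [this, show (π * (1/4:ℝ)) = π/4 by ring, Real.sin_pi_div_four]
    have h2 : (0:ℝ) < Real.sqrt 2 / 2 := by positivity
    rw [div_eq_iff h2.ne']
    linear_combination (-(π)/2) * hsqrt2
  have e3 : Real.sin (π/8) ^ 2 = (2 - Real.sqrt 2)/4 := by
    rw [Real.sin_pi_div_eight]
    rw [div_pow, Real.sq_sqrt (by nlinarith : (0:ℝ) ≤ 2 - Real.sqrt 2)]
    norm_num
  have hG18 : (0:ℝ) < Real.Gamma (1/8) := Real.Gamma_pos_of_pos (by norm_num)
  have hG78 : (0:ℝ) < Real.Gamma (7/8) := Real.Gamma_pos_of_pos (by norm_num)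
  have hG14 : (0:ℝ) < Real.Gamma (1/4) := Real.Gamma_pos_of_pos (by norm_num)
  have hG34 : (0:ℝ) < Real.Gamma (3/4) := Real.Gamma_pos_of_pos (by norm_num)
  have e1' : Real.Gamma (1/8) * Real.Gamma (7/8) * Real.sin (π/8) = π :=
    (eq_div_iff hs8pos.ne').mp e1
  have hG18eq : Real.Gamma (1/8) = π / (Real.sin (π/8) * Real.Gamma (7/8)) := by
    rw [eq_div_iff (by positivity)]
    linear_combination e1'
  have hG14eq : Real.Gamma (1/4) = π * Real.sqrt 2 / Real.Gamma (3/4) := by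
    rw [eq_div_iff hG34.ne']
    linear_combination e2
  rw [hG18eq, hG14eq, Real.sin_pi_div_eight]
  have hv : (Real.sqrt (2 - Real.sqrt 2))^2 = 2 - Real.sqrt 2 :=
    Real.sq_sqrt (by nlinarith)
  have hvpos : 0 < Real.sqrt (2 - Real.sqrt 2) := Real.sqrt_pos.mpr (by nlinarith)
  field_simp
  ring_nf
  linear_combination
    (-(2*Real.sqrt 2^2+Real.sqrt 2^3)) * hv
    + (Real.sqrt 2^2 - 2) * hsqrt2


theorem stmt_7 :
    ∑' n : ℕ, (poch (1/2) n * poch (1/2) n * poch (1/2) n) / (poch 1 n)^3 * ((1:ℝ)) * ((-1:ℝ))^n = (2 + Real.sqrt 2)/4 * (Real.Gamma (3/4))^2 / (Real.Gamma (7/8))^4 := by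
  have h : ∀ n : ℕ, (poch (1/2) n * poch (1/2) n * poch (1/2) n) / (poch 1 n)^3 * ((1:ℝ)) * ((-1:ℝ))^n
      = (bb n)^3 * (-1:ℝ)^n := by
    intro n
    rw [poch_one]
    have hfac : ((n.factorial : ℝ)) ≠ 0 := by positivity
    rw [bb]
    field_simp
  rw [tsum_congr h]
  exact final
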